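/- For 0 < ℓ < n, the number of n-periodic Dyck paths with global shift 0 and exactly ℓ peaks equals (1/n) * Σ_{k | gcd(ℓ,n)} φ(k) * binomial(n/k - 1, ℓ/k - 1) * binomial(n/k, ℓ/k). Equivalently, this counts necklaces [c_0,...,c_{n-1}] (up to cyclic rotation, indices mod n) of integers ≥ 2 with c_{i+1}+1 ≥ c_i for all i, minimal entry exactly 2, and exactly ℓ indices i with c_i ≥ c_{i-1}. -/

import Mathlib

namespace Nak

open Finset

variable {m j : ℕ}

lemma sum_sub_one {ι : Type*} (s : Finset ι) (f : ι → ℕ) (hf : ∀ i ∈ s, 1 ≤ f i) :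
    ∑ i ∈ s, (f i - 1) + s.card = ∑ i ∈ s, f i := by
  rw [Finset.card_eq_sum_ones, ← Finset.sum_add_distrib]
  exact Finset.sum_congr rfl fun i hi => by have := hf i hi; omega

/-- the difference-sequence type -/
def D (m j : ℕ) [NeZero m] : Type :=
  {d : ZMod m → ℕ // (∑ i, d i) = m ∧ Nat.card {i // d i ≠ 0} = j}

lemma card_filter_of_D [NeZero m] (d : D m j) : (univ.filter (fun i => d.1 i ≠ 0)).card = j := by
  have := d.2.2
  rwa [Nat.card_eq_fintype_card, Fintype.card_subtype] at this

noncomputable def DEquiv [NeZero m] :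
    D m j ≃ Σ S : {S : Finset (ZMod m) // S.card = j},
      {e : ZMod m → ℕ // (∀ i ∉ S.1, e i = 0) ∧ ∑ i, e i = m - j} where
  toFun d := ⟨⟨univ.filter (fun i => d.1 i ≠ 0), card_filter_of_D d⟩,
    ⟨fun i => d.1 i - 1, by
      constructor
      · intro i hi
        simp only [Finset.mem_filter, Finset.mem_univ, true_and, not_not] at hi
        show d.1 i - 1 = 0
        omega
      · show ∑ i : ZMod m, (d.1 i - 1) = m - j
        have h1 : ∑ i ∈ univ.filter (fun i => d.1 i ≠ 0), d.1 i = m := by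
          rw [Finset.sum_filter_ne_zero]; exact d.2.1
        have h2 := sum_sub_one (univ.filter (fun i => d.1 i ≠ 0)) d.1
          (fun i hi => by simp only [Finset.mem_filter, Finset.mem_univ, true_and] at hi; omega)
        rw [card_filter_of_D d, h1] at h2
        have h3 : ∑ i : ZMod m, (d.1 i - 1) = ∑ i ∈ univ.filter (fun i => d.1 i ≠ 0), (d.1 i - 1) := by
          refine (Finset.sum_subset (Finset.subset_univ _) (fun i _ hi => ?_)).symm
          simp only [Finset.mem_filter, Finset.mem_univ, true_and, not_not] at hi
          omega
        omega⟩⟩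
  invFun p := ⟨fun i => if i ∈ p.1.1 then p.2.1 i + 1 else 0, by
      obtain ⟨⟨S, hS⟩, ⟨e, he1, he2⟩⟩ := p
      constructor
      · have h1 : ∑ i : ZMod m, (if i ∈ S then e i + 1 else 0) = ∑ i ∈ S, (e i + 1) := by
          rw [Finset.sum_ite_mem, Finset.univ_inter]
        have h2 : ∑ i ∈ S, e i = ∑ i : ZMod m, e i :=
          Finset.sum_subset (Finset.subset_univ _) (fun i _ hi => he1 i hi)
        have h3 : (S.card : ℕ) ≤ Fintype.card (ZMod m) := Finset.card_le_univ S
        rw [ZMod.card] at h3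
        rw [h1, Finset.sum_add_distrib, Finset.sum_const, h2, he2, smul_eq_mul, mul_one, hS]
        omega
      · rw [Nat.card_eq_fintype_card, Fintype.card_subtype]
        have : univ.filter (fun i => (if i ∈ S then e i + 1 else 0) ≠ 0) = S := by
          ext i
          simp only [Finset.mem_filter, Finset.mem_univ, true_and]
          by_cases h : i ∈ S <;> simp [h]
        rw [this]; exact hS⟩
  left_inv d := by
    apply Subtype.ext
    funext i
    simp only
    by_cases h : d.1 i ≠ 0
    · rw [if_pos (by simp [h])]; omega
    · rw [if_neg (by simpa using h)]
      simp only [not_not] at h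
      omega
  right_inv p := by
    obtain ⟨⟨S, hS⟩, ⟨e, he1, he2⟩⟩ := p
    have hfil : univ.filter (fun i => (if i ∈ S then e i + 1 else 0) ≠ 0) = S := by
      ext i
      simp only [Finset.mem_filter, Finset.mem_univ, true_and]
      by_cases h : i ∈ S <;> simp [h]
    refine Sigma.ext (Subtype.ext (by simpa using hfil)) ?_
    rw [Subtype.heq_iff_coe_eq (fun e' => by dsimp only; rw [hfil])]
    funext i
    simp only
    by_cases h : i ∈ S
    · rw [if_pos h]; omega
    · rw [if_neg h, he1 i h]

def suppEquiv [NeZero m] (S : Finset (ZMod m)) (N : ℕ) :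
    {e : ZMod m → ℕ // (∀ i ∉ S, e i = 0) ∧ ∑ i, e i = N} ≃ {f : ↥S → ℕ // ∑ x, f x = N} where
  toFun e := ⟨fun x => e.1 x.1, by
    rw [Finset.sum_coe_sort S (fun i => e.1 i),
      Finset.sum_subset (Finset.subset_univ S) (fun i _ hi => e.2.1 i hi)]
    exact e.2.2⟩
  invFun f := ⟨fun i => if h : i ∈ S then f.1 ⟨i, h⟩ else 0, fun i hi => dif_neg hi, by
    rw [← Finset.sum_subset (Finset.subset_univ S) (fun i _ hi => dif_neg hi),
      ← Finset.sum_coe_sort S,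
      show (∑ i : ↥S, if h : (i : ZMod m) ∈ S then f.1 ⟨i, h⟩ else 0) = ∑ x : ↥S, f.1 x from
        Finset.sum_congr rfl fun x _ => dif_pos x.2]
    exact f.2⟩
  left_inv e := by
    apply Subtype.ext
    funext i
    dsimp only
    by_cases h : i ∈ S
    · exact dif_pos h
    · rw [dif_neg h, e.2.1 i h]
  right_inv f := by
    apply Subtype.ext
    funext x
    dsimp only
    exact dif_pos x.2

lemma card_D [NeZero m] (hj : 1 ≤ j) :
    Nat.card (D m j) = (m - 1).choose (j - 1) * m.choose j := by
  classical
  rw [Nat.card_congr (DEquiv.trans (Equiv.sigmaCongrRight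
    (fun S => (suppEquiv S.1 (m - j)).trans (Sym.equivNatSumOfFintype _ _).symm)))]
  rw [Nat.card_eq_fintype_card, Fintype.card_sigma]
  by_cases hjm : j ≤ m
  · have key : ∀ S : {S : Finset (ZMod m) // S.card = j},
        Fintype.card (Sym ↥S.1 (m - j)) = (m - 1).choose (j - 1) := by
      intro S
      rw [Sym.card_sym_eq_choose, Fintype.card_coe, S.2]
      have h1 : j + (m - j) - 1 = m - 1 := by omega
      have h2 : m - j = (m - 1) - (j - 1) := by omega
      rw [h1, h2, Nat.choose_symm (by omega)]
    rw [Finset.sum_congr rfl (fun S _ => key S), Finset.sum_const, Finset.card_univ,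
      Fintype.card_subtype, smul_eq_mul]
    have : (univ.filter (fun S : Finset (ZMod m) => S.card = j)).card = m.choose j := by
      have := Fintype.card_finset_len (α := ZMod m) j
      rw [Fintype.card_subtype] at this
      rw [this, ZMod.card]
    rw [this, mul_comm]
  · have he : IsEmpty {S : Finset (ZMod m) // S.card = j} :=
      ⟨fun S => hjm (S.2 ▸ (by simpa [ZMod.card] using Finset.card_le_univ S.1))⟩
    rw [Finset.univ_eq_empty, Finset.sum_empty]
    rw [Nat.choose_eq_zero_of_lt (show m < j by omega), mul_zero]







/-- sum over `ZMod m` as a sum over `range m` -/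
lemma sum_range_cast [NeZero m] {M : Type*} [AddCommMonoid M] (f : ZMod m → M) :
    ∑ u ∈ range m, f (u : ZMod m) = ∑ i : ZMod m, f i := by
  refine Finset.sum_bij' (fun u _ => (u : ZMod m)) (fun i _ => i.val) ?_ ?_ ?_ ?_ ?_
  · intro a _; exact mem_univ _
  · intro i _; exact mem_range.2 i.val_lt
  · intro a ha; exact ZMod.val_cast_of_lt (mem_range.1 ha)
  · intro i _; exact ZMod.natCast_zmod_val i
  · intro a _; rfl

lemma sum_zmod_shift [NeZero m] {M : Type*} [AddCommMonoid M] (f : ZMod m → M) (a : ZMod m) :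
    ∑ i : ZMod m, f (i + a) = ∑ i : ZMod m, f i :=
  Fintype.sum_equiv (Equiv.addRight a) _ _ (fun _ => rfl)

lemma sum_zmod_sub_shift [NeZero m] {M : Type*} [AddCommMonoid M] (f : ZMod m → M) (a : ZMod m) :
    ∑ i : ZMod m, f (i - a) = ∑ i : ZMod m, f i :=
  Fintype.sum_equiv (Equiv.subRight a) _ _ (fun _ => rfl)

/-- constancy of a function on `ZMod m` whose consecutive values agree -/
lemma const_of_step [NeZero m] {M : Type*} (e : ZMod m → M) (h : ∀ i, e i = e (i - 1)) :
    ∀ i, e i = e 0 := by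
  have key : ∀ t : ℕ, e ((t : ℕ) : ZMod m) = e 0 := by
    intro t
    induction t with
    | zero => simp
    | succ t ih =>
      have h2 : ((t + 1 : ℕ) : ZMod m) - 1 = ((t : ℕ) : ZMod m) := by push_cast; ring
      rw [h ((t + 1 : ℕ) : ZMod m), h2, ih]
  intro i
  rw [← ZMod.natCast_zmod_val i, key]

section W

/-- the difference sequence of a word -/
def dif' {m : ℕ} (c : ZMod m → ℕ) : ZMod m → ℕ := fun i => c i + 1 - c (i - 1)

lemma desc' {m : ℕ} (c : ZMod m → ℕ) (h : ∀ i, c i ≤ c (i + 1) + 1) (i : ZMod m) :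
    c (i - 1) ≤ c i + 1 := by
  have := h (i - 1)
  rwa [sub_add_cancel] at this

lemma sum_dif' [NeZero m] (c : ZMod m → ℕ) (h : ∀ i, c i ≤ c (i + 1) + 1) :
    ∑ i, dif' c i = m := by
  have key : ((∑ i, dif' c i : ℕ) : ℤ) = (m : ℤ) := by
    rw [Nat.cast_sum]
    have h1 : ∀ i : ZMod m, ((dif' c i : ℕ) : ℤ) = (c i : ℤ) + 1 - (c (i - 1) : ℤ) := by
      intro i
      have := desc' c h i
      unfold dif'
      omega
    rw [Finset.sum_congr rfl (fun i _ => h1 i), Finset.sum_sub_distrib, Finset.sum_add_distrib]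
    rw [sum_zmod_sub_shift (fun i => (c i : ℤ)) 1]
    simp [Finset.card_univ, ZMod.card]
  exact_mod_cast key

lemma dif'_ne_zero_iff {m : ℕ} (c : ZMod m → ℕ) (h : ∀ i, c i ≤ c (i + 1) + 1) (i : ZMod m) :
    dif' c i ≠ 0 ↔ c (i - 1) ≤ c i := by
  have := desc' c h i
  unfold dif'
  omega

/-- partial sums of a difference sequence -/
def F {m : ℕ} (d : ZMod m → ℕ) : ℕ → ℤ := fun t => ∑ s ∈ range t, ((d ((s + 1 : ℕ) : ZMod m) : ℤ) - 1)

lemma F_succ {m : ℕ} (d : ZMod m → ℕ) (t : ℕ) :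
    F d (t + 1) = F d t + ((d ((t + 1 : ℕ) : ZMod m) : ℤ) - 1) := by
  unfold F
  rw [Finset.sum_range_succ]

lemma F_period [NeZero m] (d : ZMod m → ℕ) (hd : ∑ i, d i = m) (t : ℕ) :
    F d (t + m) = F d t := by
  have hsplit : F d (t + m) = F d t + ∑ u ∈ range m, ((d ((t + u + 1 : ℕ) : ZMod m) : ℤ) - 1) := by
    unfold F
    rw [Finset.sum_range_add]
  rw [hsplit]
  have h1 : ∀ u ∈ range m, ((d ((t + u + 1 : ℕ) : ZMod m) : ℤ) - 1)
      = (fun i : ZMod m => (d (i + ((t + 1 : ℕ) : ZMod m)) : ℤ) - 1) ((u : ℕ) : ZMod m) := by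
    intro u _
    congr 2
    push_cast
    ring
  have h2 : ∑ u ∈ range m, ((d ((t + u + 1 : ℕ) : ZMod m) : ℤ) - 1) = 0 := by
    rw [Finset.sum_congr rfl h1,
      sum_range_cast (fun i : ZMod m => (d (i + ((t + 1 : ℕ) : ZMod m)) : ℤ) - 1),
      sum_zmod_shift (fun i => (d i : ℤ) - 1), Finset.sum_sub_distrib]
    simp [Finset.card_univ, ZMod.card, ← Nat.cast_sum, hd]
  rw [h2, add_zero]

/-- the normalized potential -/
def G [NeZero m] (d : ZMod m → ℕ) : ZMod m → ℤ := fun i => F d i.val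

lemma G_rec [NeZero m] (d : ZMod m → ℕ) (hd : ∑ i, d i = m) (i : ZMod m) :
    G d i - G d (i - 1) = (d i : ℤ) - 1 := by
  have hm : 1 ≤ m := Nat.one_le_iff_ne_zero.2 (NeZero.ne m)
  by_cases ht : i.val = 0
  · have hi0 : i = 0 := by
      rw [← ZMod.natCast_zmod_val i, ht, Nat.cast_zero]
    subst hi0
    have hcast : ((m - 1 : ℕ) : ZMod m) = 0 - 1 := by
      rw [Nat.cast_sub hm, ZMod.natCast_self, Nat.cast_one]
    have hval : (0 - 1 : ZMod m).val = m - 1 := by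
      rw [← hcast, ZMod.val_cast_of_lt (by omega)]
    have hFm : F d ((m - 1) + 1) = F d (m - 1) + ((d (((m - 1) + 1 : ℕ) : ZMod m) : ℤ) - 1) :=
      F_succ d (m - 1)
    have hm1 : (m - 1) + 1 = m := by omega
    have hF0 : F d m = F d 0 := by
      have := F_period d hd 0
      simpa using this
    rw [hm1] at hFm
    have hdm : ((m : ℕ) : ZMod m) = 0 := ZMod.natCast_self m
    rw [hdm] at hFm
    show F d (0 : ZMod m).val - F d (0 - 1 : ZMod m).val = (d 0 : ℤ) - 1
    rw [ZMod.val_zero, hval]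
    have : F d 0 = 0 := by unfold F; simp
    omega
  · set t := i.val with htdef
    have htm : t < m := i.val_lt
    have hi : i = ((t : ℕ) : ZMod m) := (ZMod.natCast_zmod_val i).symm
    have hi1 : i - 1 = ((t - 1 : ℕ) : ZMod m) := by
      rw [hi, Nat.cast_sub (by omega), Nat.cast_one]
    have hval1 : ((t - 1 : ℕ) : ZMod m).val = t - 1 := ZMod.val_cast_of_lt (by omega)
    show F d i.val - F d (i - 1).val = (d i : ℤ) - 1
    rw [hi1, hval1, ← htdef]
    have := F_succ d (t - 1)
    have ht1 : (t - 1) + 1 = t := by omega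
    rw [ht1] at this
    rw [this]
    have : ((t : ℕ) : ZMod m) = i := ZMod.natCast_zmod_val i
    rw [this]
    ring

/-- minimum of G -/
noncomputable def Mn [NeZero m] (d : ZMod m → ℕ) : ℤ :=
  Finset.univ.inf' Finset.univ_nonempty (G d)

noncomputable def build [NeZero m] (d : ZMod m → ℕ) : ZMod m → ℕ :=
  fun i => (G d i - Mn d + 2).toNat

lemma Mn_le [NeZero m] (d : ZMod m → ℕ) (i : ZMod m) : Mn d ≤ G d i :=
  Finset.inf'_le _ (Finset.mem_univ i)

lemma build_cast [NeZero m] (d : ZMod m → ℕ) (i : ZMod m) :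
    (build d i : ℤ) = G d i - Mn d + 2 := by
  have := Mn_le d i
  unfold build
  omega

lemma build_ge [NeZero m] (d : ZMod m → ℕ) (i : ZMod m) : 2 ≤ build d i := by
  have h1 := build_cast d i
  have h2 := Mn_le d i
  omega

lemma build_min [NeZero m] (d : ZMod m → ℕ) : ∃ i, build d i = 2 := by
  obtain ⟨i, _, hi⟩ := Finset.exists_mem_eq_inf' (Finset.univ_nonempty) (G d)
  refine ⟨i, ?_⟩
  have h1 := build_cast d i
  have : Mn d = G d i := hi
  omega

lemma build_desc [NeZero m] (d : ZMod m → ℕ) (hd : ∑ i, d i = m) (i : ZMod m) :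
    build d i ≤ build d (i + 1) + 1 := by
  have h1 := G_rec d hd (i + 1)
  rw [add_sub_cancel_right] at h1
  have h2 := build_cast d i
  have h3 := build_cast d (i + 1)
  omega

lemma dif'_build [NeZero m] (d : ZMod m → ℕ) (hd : ∑ i, d i = m) (i : ZMod m) :
    dif' (build d) i = d i := by
  have h1 := G_rec d hd i
  have h2 := build_cast d i
  have h3 := build_cast d (i - 1)
  unfold dif'
  omega

/-- the word type -/
def Wrd (m j : ℕ) : Type :=
  {c : ZMod m → ℕ // (∀ i, 2 ≤ c i) ∧ (∀ i, c i ≤ c (i + 1) + 1) ∧ (∃ i, c i = 2) ∧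
    Nat.card {i : ZMod m // c (i - 1) ≤ c i} = j}

lemma card_supp_dif' {m : ℕ} (c : ZMod m → ℕ) (h : ∀ i, c i ≤ c (i + 1) + 1) :
    Nat.card {i // dif' c i ≠ 0} = Nat.card {i : ZMod m // c (i - 1) ≤ c i} :=
  Nat.card_congr (Equiv.subtypeEquivRight (fun i => by
    rw [dif'_ne_zero_iff c h i]))

noncomputable def WrdEquivD [NeZero m] : Wrd m j ≃ D m j := by
  refine Equiv.ofBijective
    (fun c => ⟨dif' c.1, sum_dif' c.1 c.2.2.1, by
      rw [card_supp_dif' c.1 c.2.2.1]; exact c.2.2.2.2⟩) ⟨?_, ?_⟩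
  · rintro ⟨c, hc2, hcd, hcm, hcl⟩ ⟨c', hc2', hcd', hcm', hcl'⟩ heq
    have hd : ∀ i, dif' c i = dif' c' i := fun i =>
      congrFun (congrArg Subtype.val heq) i
    have hstep : ∀ i : ZMod m, (c i : ℤ) - (c' i : ℤ) = (c (i - 1) : ℤ) - (c' (i - 1) : ℤ) := by
      intro i
      have h1 := hd i
      have h2 := desc' c hcd i
      have h3 := desc' c' hcd' i
      unfold dif' at h1
      omega
    have hconst := const_of_step (fun i => (c i : ℤ) - (c' i : ℤ)) hstep
    obtain ⟨i0, hi0⟩ := hcm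
    obtain ⟨i1, hi1⟩ := hcm'
    have e1 := hconst i0
    have e2 := hconst i1
    have g1 := hc2' i0
    have g2 := hc2 i1
    have hz : ∀ i : ZMod m, (c i : ℤ) - (c' i : ℤ) = 0 := by
      intro i
      have := hconst i
      omega
    apply Subtype.ext
    funext i
    show c i = c' i
    have := hz i
    omega
  · rintro ⟨d, hd, hdl⟩
    refine ⟨⟨build d, build_ge d, fun i => build_desc d hd i, build_min d, ?_⟩, ?_⟩
    · rw [← card_supp_dif' (build d) (fun i => build_desc d hd i)]
      rw [Nat.card_congr (Equiv.subtypeEquivRight (fun i => by rw [dif'_build d hd i]))]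
      exact hdl
    · apply Subtype.ext
      funext i
      exact dif'_build d hd i

lemma card_Wrd [NeZero m] (hj : 1 ≤ j) :
    Nat.card (Wrd m j) = (m - 1).choose (j - 1) * m.choose j := by
  rw [Nat.card_congr (WrdEquivD (m := m) (j := j))]
  exact card_D hj

end W







section Fibers

variable {n d : ℕ} [NeZero n] [NeZero d] (hd : d ∣ n)

/-- fiber of castHom over 0 -/
noncomputable def kerEquiv :
    {i : ZMod n // ZMod.castHom hd (ZMod d) i = 0} ≃ Fin (n / d) where
  toFun i := ⟨i.1.val / d, by
    have h1 : d ∣ i.1.val := by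
      have := i.2
      rwa [ZMod.castHom_apply, ← ZMod.natCast_val, ZMod.natCast_eq_zero_iff] at this
    exact Nat.div_lt_div_of_lt_of_dvd hd i.1.val_lt⟩
  invFun s := ⟨((d * s.1 : ℕ) : ZMod n), by
    rw [ZMod.castHom_apply, ← ZMod.natCast_val, ZMod.natCast_eq_zero_iff]
    have hd0 : 0 < d := Nat.pos_of_ne_zero (NeZero.ne d)
    have hs : d * s.1 < n := by
      have h2 : d * s.1 < d * (n / d) := mul_lt_mul_of_pos_left s.2 hd0
      rwa [Nat.mul_div_cancel' hd] at h2
    rw [ZMod.val_cast_of_lt hs]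
    exact Dvd.intro _ rfl⟩
  left_inv i := by
    apply Subtype.ext
    have h1 : d ∣ i.1.val := by
      have := i.2
      rwa [ZMod.castHom_apply, ← ZMod.natCast_val, ZMod.natCast_eq_zero_iff] at this
    simp only
    rw [Nat.mul_div_cancel' h1, ZMod.natCast_zmod_val]
  right_inv s := by
    apply Fin.ext
    have hd0 : 0 < d := Nat.pos_of_ne_zero (NeZero.ne d)
    have hs : d * s.1 < n := by
      have h2 : d * s.1 < d * (n / d) := mul_lt_mul_of_pos_left s.2 hd0
      rwa [Nat.mul_div_cancel' hd] at h2
    simp only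
    rw [ZMod.val_cast_of_lt hs, Nat.mul_div_cancel_left _ hd0]

lemma card_fiber_zero : Nat.card {i : ZMod n // ZMod.castHom hd (ZMod d) i = 0} = n / d := by
  rw [Nat.card_congr (kerEquiv hd), Nat.card_eq_fintype_card, Fintype.card_fin]

lemma card_fiber (jj : ZMod d) :
    Nat.card {i : ZMod n // ZMod.castHom hd (ZMod d) i = jj} = n / d := by
  set f := ZMod.castHom hd (ZMod d)
  have hsurj : f ((jj.val : ℕ) : ZMod n) = jj := by
    rw [map_natCast, ZMod.natCast_zmod_val]
  rw [← card_fiber_zero hd]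
  apply Nat.card_congr
  refine Equiv.subtypeEquiv (Equiv.subRight ((jj.val : ℕ) : ZMod n)) (fun i => ?_)
  simp only [Equiv.subRight_apply]
  rw [map_sub, hsurj, sub_eq_zero]

lemma card_pullback (P : ZMod d → Prop) :
    Nat.card {i : ZMod n // P (ZMod.castHom hd (ZMod d) i)}
      = (n / d) * Nat.card {jj : ZMod d // P jj} := by
  classical
  set f := ZMod.castHom hd (ZMod d)
  have E : {i : ZMod n // P (f i)} ≃ Σ jj : {jj : ZMod d // P jj}, {i : ZMod n // f i = jj.1} := by
    refine ⟨fun i => ⟨⟨f i.1, i.2⟩, ⟨i.1, rfl⟩⟩, fun p => ⟨p.2.1, by rw [p.2.2]; exact p.1.2⟩,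
      fun i => rfl, ?_⟩
    rintro ⟨⟨jj, hjj⟩, ⟨i, hi⟩⟩
    refine Sigma.ext (Subtype.ext hi) ?_
    rw [Subtype.heq_iff_coe_eq (fun x => by dsimp only; rw [hi])]
  rw [Nat.card_congr E, Nat.card_eq_fintype_card, Fintype.card_sigma]
  have : ∀ jj : {jj : ZMod d // P jj}, Fintype.card {i : ZMod n // f i = jj.1} = n / d := by
    intro jj
    rw [← Nat.card_eq_fintype_card]
    exact card_fiber hd jj.1
  rw [Finset.sum_congr rfl (fun jj _ => this jj), Finset.sum_const, Finset.card_univ, smul_eq_mul,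
    Nat.card_eq_fintype_card, mul_comm]

end Fibers



section Stab

variable {n : ℕ} [NeZero n]

/-- the subgroup of shifts fixing `c` -/
def stab (c : ZMod n → ℕ) : AddSubgroup (ZMod n) where
  carrier := {s | ∀ i, c (i + s) = c i}
  zero_mem' := fun i => by rw [add_zero]
  add_mem' := by
    intro a b ha hb i
    rw [← add_assoc, hb (i + a), ha i]
  neg_mem' := by
    intro a ha i
    have h := ha (i + -a)
    rw [neg_add_cancel_right] at h
    exact h.symm

lemma gcd_mem_stab {c : ZMod n → ℕ} {t : ZMod n} (h : t ∈ stab c) :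
    ((Nat.gcd t.val n : ℕ) : ZMod n) ∈ stab c := by
  have key : ((Nat.gcd t.val n : ℕ) : ZMod n) = (Nat.gcdA t.val n) • t := by
    have hb := Nat.gcd_eq_gcd_ab t.val n
    have h2 : (((Nat.gcd t.val n : ℕ) : ℤ) : ZMod n)
        = (((t.val : ℤ) * Nat.gcdA t.val n + (n : ℤ) * Nat.gcdB t.val n : ℤ) : ZMod n) := by
      rw [← hb]
    push_cast at h2
    rw [ZMod.natCast_zmod_val, ZMod.natCast_self, zero_mul, add_zero] at h2
    rw [h2, zsmul_eq_mul]
    ring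
  rw [key]
  exact AddSubgroup.zsmul_mem _ h _

lemma mem_stab_of_gcd {c : ZMod n → ℕ} {t : ZMod n}
    (h : ((Nat.gcd t.val n : ℕ) : ZMod n) ∈ stab c) : t ∈ stab c := by
  set g := Nat.gcd t.val n with hg
  obtain ⟨q, hq⟩ : g ∣ t.val := Nat.gcd_dvd_left _ _
  have key : t = q • ((g : ℕ) : ZMod n) := by
    have h1 : t = ((t.val : ℕ) : ZMod n) := (ZMod.natCast_zmod_val t).symm
    conv_lhs => rw [h1, hq]
    push_cast
    rw [nsmul_eq_mul]
    ring
  rw [key]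
  exact AddSubgroup.nsmul_mem _ h _

/-- invariance under the kernel of the cast map -/
lemma invariant_of_cast_eq {d : ℕ} [NeZero d] (hd : d ∣ n) {c : ZMod n → ℕ}
    (h : ((d : ℕ) : ZMod n) ∈ stab c) {i i' : ZMod n}
    (heq : ZMod.castHom hd (ZMod d) i = ZMod.castHom hd (ZMod d) i') : c i = c i' := by
  have h0 : ZMod.castHom hd (ZMod d) (i - i') = 0 := by
    rw [map_sub, heq, sub_self]
  have hdvd : d ∣ (i - i').val := by
    rwa [ZMod.castHom_apply, ← ZMod.natCast_val, ZMod.natCast_eq_zero_iff] at h0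
  obtain ⟨q, hq⟩ := hdvd
  have hmem : (i - i') ∈ stab c := by
    have : (i - i' : ZMod n) = q • ((d : ℕ) : ZMod n) := by
      rw [← ZMod.natCast_zmod_val (i - i'), hq]
      push_cast
      rw [nsmul_eq_mul]
      ring
    rw [this]
    exact AddSubgroup.nsmul_mem _ h _
  have := hmem i'
  rwa [add_sub_cancel] at this

end Stab

section Bound

variable {n l : ℕ} [NeZero n]

lemma step_bound (c : ZMod n → ℕ) (hcd : ∀ i, c i ≤ c (i + 1) + 1) :
    ∀ s : ℕ, ∀ i, c i ≤ c (i + (s : ℕ)) + s := by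
  intro s
  induction s with
  | zero => intro i; simp
  | succ s ih =>
    intro i
    have h1 := ih i
    have h2 := hcd (i + (s : ℕ))
    have h3 : ((s + 1 : ℕ) : ZMod n) = ((s : ℕ) : ZMod n) + 1 := by push_cast; ring
    have h4 : i + (((s : ℕ) : ZMod n) + 1) = i + ((s : ℕ) : ZMod n) + 1 := (add_assoc _ _ _).symm
    rw [h3, h4]
    omega

lemma word_bound (c : ZMod n → ℕ) (hcd : ∀ i, c i ≤ c (i + 1) + 1) (hmin : ∃ i, c i = 2) :
    ∀ i, c i ≤ n + 2 := by
  obtain ⟨i0, hi0⟩ := hmin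
  intro i
  have h1 := step_bound c hcd ((i0 - i).val) i
  rw [ZMod.natCast_zmod_val (i0 - i)] at h1
  have h2 : i + (i0 - i) = i0 := by ring
  rw [h2, hi0] at h1
  have h3 := (i0 - i).val_lt
  omega

instance : Finite (Wrd n l) := by
  have hinj : Function.Injective (fun c : Wrd n l => (fun i => (⟨min (c.1 i) (n + 2), by omega⟩ : Fin (n + 3)))) := by
    intro c c' h
    have hb := word_bound c.1 c.2.2.1 c.2.2.2.1
    have hb' := word_bound c'.1 c'.2.2.1 c'.2.2.2.1
    apply Subtype.ext
    funext i
    have := congrFun h i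
    simp only [Fin.mk.injEq] at this
    have h1 := hb i
    have h2 := hb' i
    omega
  exact Finite.of_injective _ hinj

/-- the shift action -/
instance shiftAction : AddAction (ZMod n) (Wrd n l) where
  vadd t c := ⟨fun i => c.1 (i + t), by
    obtain ⟨c, h2, hcd, ⟨i0, hi0⟩, hcl⟩ := c
    refine ⟨fun i => h2 _, fun i => ?_, ⟨i0 - t, show c (i0 - t + t) = 2 by rwa [sub_add_cancel]⟩, ?_⟩
    · have := hcd (i + t)
      rwa [add_right_comm] at this
    · show Nat.card {i : ZMod n // c (i - 1 + t) ≤ c (i + t)} = l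
      rw [← hcl]
      exact Nat.card_congr (Equiv.subtypeEquiv (Equiv.addRight t) (fun i => by
        simp only [Equiv.coe_addRight]
        rw [sub_add_eq_add_sub]))⟩
  zero_vadd c := Subtype.ext (funext fun i => show c.1 (i + 0) = c.1 i by rw [add_zero])
  add_vadd s t c := Subtype.ext (funext fun i => show c.1 (i + (s + t)) = c.1 (i + s + t) by
    rw [add_assoc])

lemma mem_fixedBy_iff (t : ZMod n) (c : Wrd n l) :
    c ∈ AddAction.fixedBy (Wrd n l) t ↔ t ∈ stab c.1 := by
  rw [AddAction.mem_fixedBy]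
  constructor
  · intro h i
    exact congrFun (congrArg Subtype.val h) i
  · intro h
    exact Subtype.ext (funext fun i => h i)

end Bound


section Fix

variable {n l : ℕ} [NeZero n]

/-- number of fixed points as function of the gcd -/
def wfun (n l d : ℕ) : ℕ :=
  if (n / d) ∣ l then (d - 1).choose (l / (n / d) - 1) * d.choose (l / (n / d)) else 0

lemma card_fix (d : ℕ) [NeZero d] (hdn : d ∣ n) (hl : 0 < l) :
    Nat.card {c : Wrd n l // ((d : ℕ) : ZMod n) ∈ stab c.1} = wfun n l d := by
  classical
  set k := n / d with hk
  have hn0 : 0 < n := Nat.pos_of_ne_zero (NeZero.ne n)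
  have hk0 : 0 < k := Nat.div_pos (Nat.le_of_dvd hn0 hdn) (Nat.pos_of_ne_zero (NeZero.ne d))
  set f := ZMod.castHom hdn (ZMod d) with hf
  have hfnat : ∀ jj : ZMod d, f ((jj.val : ℕ) : ZMod n) = jj := by
    intro jj
    rw [map_natCast, ZMod.natCast_zmod_val]
  -- For any fixed word, peak count factors
  have main : ∀ c : {c : Wrd n l // ((d : ℕ) : ZMod n) ∈ stab c.1},
      l = k * Nat.card {jj : ZMod d //
        c.1.1 (((jj - 1).val : ℕ) : ZMod n) ≤ c.1.1 ((jj.val : ℕ) : ZMod n)} := by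
    intro c
    set b := fun jj : ZMod d => c.1.1 ((jj.val : ℕ) : ZMod n) with hb
    have hbf : ∀ i, b (f i) = c.1.1 i := by
      intro i
      exact invariant_of_cast_eq hdn c.2 (by rw [hfnat])
    have h1 : l = Nat.card {i : ZMod n // c.1.1 (i - 1) ≤ c.1.1 i} := c.1.2.2.2.2.symm
    have h2 : Nat.card {i : ZMod n // c.1.1 (i - 1) ≤ c.1.1 i}
        = Nat.card {i : ZMod n // b (f i - 1) ≤ b (f i)} := by
      apply Nat.card_congr
      refine Equiv.subtypeEquivRight (fun i => ?_)
      rw [show f i - 1 = f (i - 1) by rw [map_sub, map_one], hbf, hbf]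
    have h3 := card_pullback hdn (fun jj : ZMod d => b (jj - 1) ≤ b jj)
    exact h1.trans (h2.trans h3)
  by_cases hkl : k ∣ l
  · -- the equivalence with words of length d
    have hlk1 : 1 ≤ l / k := Nat.one_le_div_iff hk0 |>.2 (Nat.le_of_dvd hl hkl)
    have E : {c : Wrd n l // ((d : ℕ) : ZMod n) ∈ stab c.1} ≃ Wrd d (l / k) := by
      refine Equiv.ofBijective (fun c => ⟨fun jj => c.1.1 ((jj.val : ℕ) : ZMod n),
        ⟨fun jj => c.1.2.1 _, ?_, ?_, ?_⟩⟩) ⟨?_, ?_⟩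
      · -- descent condition
        intro jj
        have hbf : ∀ i, c.1.1 (((f i).val : ℕ) : ZMod n) = c.1.1 i := by
          intro i
          exact invariant_of_cast_eq hdn c.2 (by rw [hfnat])
        set i := ((jj.val : ℕ) : ZMod n) with hi
        have hfi : f i = jj := hfnat jj
        have hfi1 : f (i + 1) = jj + 1 := by rw [map_add, map_one, hfi]
        have h1 := c.1.2.2.1 i
        calc c.1.1 ((jj.val : ℕ) : ZMod n) = c.1.1 i := rfl
          _ ≤ c.1.1 (i + 1) + 1 := h1
          _ = c.1.1 ((((jj + 1 : ZMod d)).val : ℕ) : ZMod n) + 1 := by rw [← hfi1, hbf]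
      · -- existence of minimum
        obtain ⟨i0, hi0⟩ := c.1.2.2.2.1
        refine ⟨f i0, ?_⟩
        have h5 : c.1.1 (((f i0).val : ℕ) : ZMod n) = c.1.1 i0 :=
          invariant_of_cast_eq hdn c.2 (by rw [hfnat])
        show c.1.1 (((f i0).val : ℕ) : ZMod n) = 2
        rw [h5, hi0]
      · -- peak count
        have hm := main c
        show Nat.card {jj : ZMod d //
            c.1.1 (((jj - 1).val : ℕ) : ZMod n) ≤ c.1.1 ((jj.val : ℕ) : ZMod n)} = l / k
        exact (Nat.div_eq_of_eq_mul_left hk0 (hm.trans (Nat.mul_comm _ _))).symm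
      · -- injectivity
        rintro c c' heq
        have hb : ∀ jj : ZMod d, c.1.1 ((jj.val : ℕ) : ZMod n) = c'.1.1 ((jj.val : ℕ) : ZMod n) :=
          fun jj => congrFun (congrArg Subtype.val heq) jj
        apply Subtype.ext
        apply Subtype.ext
        funext i
        have h1 : c.1.1 (((f i).val : ℕ) : ZMod n) = c.1.1 i :=
          invariant_of_cast_eq hdn c.2 (by rw [hfnat])
        have h2 : c'.1.1 (((f i).val : ℕ) : ZMod n) = c'.1.1 i :=
          invariant_of_cast_eq hdn c'.2 (by rw [hfnat])
        rw [← h1, ← h2, hb]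
      · -- surjectivity
        rintro ⟨w, hw2, hwd, hwm, hwl⟩
        have hstab : ∀ i : ZMod n, (fun i => w (f i)) (i + ((d : ℕ) : ZMod n)) = (fun i => w (f i)) i := by
          intro i
          simp only
          rw [map_add, map_natCast, ZMod.natCast_self, add_zero]
        have hpk : Nat.card {i : ZMod n // w (f (i - 1)) ≤ w (f i)} = l := by
          have h2 : Nat.card {i : ZMod n // w (f (i - 1)) ≤ w (f i)}
              = Nat.card {i : ZMod n // w (f i - 1) ≤ w (f i)} := by
            apply Nat.card_congr
            exact Equiv.subtypeEquivRight (fun i => by rw [map_sub, map_one])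
          rw [h2, card_pullback hdn (fun jj : ZMod d => w (jj - 1) ≤ w jj), hwl, ← hk]
          exact Nat.mul_div_cancel' hkl
        refine ⟨⟨⟨fun i => w (f i), fun i => hw2 _, fun i => by
            simp only [map_add, map_one]; exact hwd (f i), ?_, hpk⟩, hstab⟩, ?_⟩
        · obtain ⟨jj0, hjj0⟩ := hwm
          exact ⟨((jj0.val : ℕ) : ZMod n),
            show w (f ((jj0.val : ℕ) : ZMod n)) = 2 by rw [hfnat, hjj0]⟩
        · apply Subtype.ext
          funext jj
          show w (f ((jj.val : ℕ) : ZMod n)) = w jj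
          rw [hfnat]
    rw [Nat.card_congr E, wfun, if_pos hkl]
    exact card_Wrd hlk1
  · -- empty
    have : IsEmpty {c : Wrd n l // ((d : ℕ) : ZMod n) ∈ stab c.1} := by
      refine ⟨fun c => hkl ?_⟩
      exact Dvd.intro _ (main c).symm
    rw [Nat.card_of_isEmpty, wfun, if_neg hkl]

lemma card_fixedBy (hl : 0 < l) (t : ZMod n) :
    Nat.card (AddAction.fixedBy (Wrd n l) t) = wfun n l (Nat.gcd t.val n) := by
  haveI : NeZero (Nat.gcd t.val n) :=
    ⟨(Nat.gcd_pos_of_pos_right _ (Nat.pos_of_ne_zero (NeZero.ne n))).ne'⟩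
  have h1 : Nat.card (AddAction.fixedBy (Wrd n l) t)
      = Nat.card {c : Wrd n l // ((Nat.gcd t.val n : ℕ) : ZMod n) ∈ stab c.1} := by
    apply Nat.card_congr
    refine Equiv.subtypeEquivRight (fun c => ?_)
    rw [mem_fixedBy_iff t c]
    exact ⟨fun h => gcd_mem_stab h, fun h => mem_stab_of_gcd h⟩
  rw [h1]
  exact card_fix (Nat.gcd t.val n) (Nat.gcd_dvd_right _ _) hl

end Fix


section Final

variable {n l : ℕ}

lemma card_gcd_filter (hn : 0 < n) (dd : ℕ) (hdd : dd ∣ n) (hdd0 : 0 < dd) :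
    ((Finset.range n).filter (fun t => Nat.gcd t n = dd)).card = (n / dd).totient := by
  rw [Nat.totient_eq_card_coprime]
  refine Finset.card_bij' (fun t _ => t / dd) (fun s _ => dd * s) ?_ ?_ ?_ ?_
  · intro t ht
    simp only [Finset.mem_filter, Finset.mem_range] at ht ⊢
    obtain ⟨htn, hgcd⟩ := ht
    refine ⟨Nat.div_lt_div_of_lt_of_dvd hdd htn, ?_⟩
    have hco := Nat.coprime_div_gcd_div_gcd (m := t) (n := n) (by rw [hgcd]; exact hdd0)
    rw [hgcd] at hco
    exact hco.symm
  · intro s hs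
    simp only [Finset.mem_filter, Finset.mem_range] at hs ⊢
    obtain ⟨hsn, hco⟩ := hs
    constructor
    · have h2 : dd * s < dd * (n / dd) := mul_lt_mul_of_pos_left hsn hdd0
      rwa [Nat.mul_div_cancel' hdd] at h2
    · conv_lhs => rw [show n = dd * (n / dd) from (Nat.mul_div_cancel' hdd).symm]
      rw [Nat.gcd_mul_left, Nat.Coprime.gcd_eq_one hco.symm, mul_one]
  · intro t ht
    simp only [Finset.mem_filter, Finset.mem_range] at ht
    obtain ⟨htn, hgcd⟩ := ht
    exact Nat.mul_div_cancel' (hgcd ▸ Nat.gcd_dvd_left t n)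
  · intro s _
    exact Nat.mul_div_cancel_left s hdd0

lemma sum_wfun [NeZero n] (hl : 0 < l) :
    ∑ t : ZMod n, wfun n l (Nat.gcd t.val n)
      = ∑ dd ∈ n.divisors, (n / dd).totient * wfun n l dd := by
  have hn : 0 < n := Nat.pos_of_ne_zero (NeZero.ne n)
  have h1 : ∑ t : ZMod n, wfun n l (Nat.gcd t.val n)
      = ∑ t ∈ Finset.range n, wfun n l (Nat.gcd t n) := by
    rw [← sum_range_cast (fun t : ZMod n => wfun n l (Nat.gcd t.val n))]
    exact Finset.sum_congr rfl (fun u hu => by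
      rw [ZMod.val_cast_of_lt (Finset.mem_range.1 hu)])
  rw [h1]
  rw [← Finset.sum_fiberwise_of_maps_to (g := fun t => Nat.gcd t n) (fun t _ => ?_)
    (fun t => wfun n l (Nat.gcd t n))]
  · refine Finset.sum_congr rfl (fun dd hdd => ?_)
    have hdvd : dd ∣ n := (Nat.mem_divisors.1 hdd).1
    have hdd0 : 0 < dd := Nat.pos_of_dvd_of_pos hdvd hn
    have h2 : ∀ t ∈ (Finset.range n).filter (fun t => Nat.gcd t n = dd),
        wfun n l (Nat.gcd t n) = wfun n l dd := by
      intro t ht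
      rw [(Finset.mem_filter.1 ht).2]
    rw [Finset.sum_congr rfl h2, Finset.sum_const, card_gcd_filter hn dd hdvd hdd0, smul_eq_mul]
  · exact Nat.mem_divisors.2 ⟨Nat.gcd_dvd_right t n, hn.ne'⟩

lemma burnside [NeZero n] (hl : 0 < l) :
    Nat.card (Quotient (AddAction.orbitRel (ZMod n) (Wrd n l))) * n
      = ∑ dd ∈ n.divisors, (n / dd).totient * wfun n l dd := by
  classical
  letI : Fintype (Wrd n l) := Fintype.ofFinite _
  letI : ∀ t : ZMod n, Fintype (AddAction.fixedBy (Wrd n l) t) := fun t => Fintype.ofFinite _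
  letI : Fintype (Quotient (AddAction.orbitRel (ZMod n) (Wrd n l))) := Fintype.ofFinite _
  have hb := AddAction.sum_card_fixedBy_eq_card_orbits_mul_card_addGroup (ZMod n) (Wrd n l)
  have h1 : ∑ t : ZMod n, Fintype.card (AddAction.fixedBy (Wrd n l) t)
      = ∑ t : ZMod n, wfun n l (Nat.gcd t.val n) := by
    refine Finset.sum_congr rfl (fun t _ => ?_)
    rw [← Nat.card_eq_fintype_card]
    exact card_fixedBy hl t
  rw [h1, sum_wfun hl] at hb
  rw [hb, Nat.card_eq_fintype_card, ZMod.card]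

end Final


section Assemble

variable {n l : ℕ}

lemma divisors_gcd_eq (hl : 0 < l) (hn : 0 < n) :
    (Nat.gcd l n).divisors = n.divisors.filter (· ∣ l) := by
  ext k
  simp only [Nat.mem_divisors, Finset.mem_filter]
  constructor
  · rintro ⟨hk, -⟩
    exact ⟨⟨(Nat.dvd_gcd_iff.1 hk).2, hn.ne'⟩, (Nat.dvd_gcd_iff.1 hk).1⟩
  · rintro ⟨⟨hkn, -⟩, hkl⟩
    refine ⟨Nat.dvd_gcd hkl hkn, fun h => ?_⟩
    have := Nat.eq_zero_of_gcd_eq_zero_right h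
    omega

lemma sum_transform [NeZero n] (hl : 0 < l) (hn : 0 < n) :
    ∑ dd ∈ n.divisors, (n / dd).totient * wfun n l dd
      = ∑ k ∈ (Nat.gcd l n).divisors,
          k.totient * ((n / k - 1).choose (l / k - 1) * (n / k).choose (l / k)) := by
  have h1 : ∀ dd ∈ n.divisors, (n / dd).totient * wfun n l dd
      = (fun k => k.totient * wfun n l (n / k)) (n / dd) := by
    intro dd hdd
    simp only
    rw [Nat.div_div_self (Nat.mem_divisors.1 hdd).1 hn.ne']
  rw [Finset.sum_congr rfl h1, Nat.sum_div_divisors n (fun k => k.totient * wfun n l (n / k))]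
  have h2 : ∀ k ∈ n.divisors, k.totient * wfun n l (n / k)
      = if k ∣ l then k.totient * ((n / k - 1).choose (l / k - 1) * (n / k).choose (l / k))
        else 0 := by
    intro k hk
    have hkdvd := (Nat.mem_divisors.1 hk).1
    rw [wfun, Nat.div_div_self hkdvd hn.ne']
    by_cases h : k ∣ l
    · rw [if_pos h, if_pos h]
    · rw [if_neg h, if_neg h, mul_zero]
  rw [Finset.sum_congr rfl h2, ← Finset.sum_filter, ← divisors_gcd_eq hl hn]

end Assemble


/-- For `0 < l < n`, the number of `n`-periodic Dyck paths with global
shift `0` and exactly `l` peaks, i.e. the number of necklaces `[c 0, …, c (n-1)]` (up to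
cyclic rotation) of integers `≥ 2` with `c i ≤ c (i+1) + 1`, minimal entry exactly `2`,
and exactly `l` indices `i` with `c i ≥ c (i-1)`, equals
`(1/n) * ∑_{k ∣ gcd(l,n)} φ(k) * binomial (n/k - 1) (l/k - 1) * binomial (n/k) (l/k)`. -/
theorem periodic_peaks_count (n l : ℕ) (hl : 0 < l) (hln : l < n) :
    (Nat.card (Quot (fun (a b : {c : ZMod n → ℕ // (∀ i, 2 ≤ c i) ∧
          (∀ i, c i ≤ c (i + 1) + 1) ∧ (∃ i, c i = 2) ∧
          Nat.card {i : ZMod n // c (i - 1) ≤ c i} = l}) =>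
        ∃ t : ZMod n, ∀ i, b.1 i = a.1 (i + t))) : ℚ) =
      (1 : ℚ) / n * ∑ k ∈ (Nat.gcd l n).divisors, (k.totient : ℚ) *
        ((n / k - 1).choose (l / k - 1) : ℚ) * ((n / k).choose (l / k) : ℚ) := by

  haveI : NeZero n := ⟨by omega⟩
  have hn : 0 < n := by omega
  have key : ∀ a b : Wrd n l, (∃ t : ZMod n, ∀ i, b.1 i = a.1 (i + t))
      ↔ AddAction.orbitRel (ZMod n) (Wrd n l) a b := by
    intro a b
    rw [AddAction.orbitRel_apply, AddAction.mem_orbit_iff]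
    constructor
    · rintro ⟨t, ht⟩
      refine ⟨-t, ?_⟩
      have hb : b = t +ᵥ a := Subtype.ext (funext fun i => ht i)
      rw [hb, ← add_vadd, neg_add_cancel, zero_vadd]
    · rintro ⟨x, hx⟩
      refine ⟨-x, fun i => ?_⟩
      have hb : b = (-x) +ᵥ a := by rw [← hx, ← add_vadd, neg_add_cancel, zero_vadd]
      rw [hb]
      rfl
  have E : Quot (fun (a b : Wrd n l) => ∃ t : ZMod n, ∀ i, b.1 i = a.1 (i + t))
      ≃ Quotient (AddAction.orbitRel (ZMod n) (Wrd n l)) := Quot.congrRight key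
  have hN : Nat.card (Quot (fun (a b : Wrd n l) => ∃ t : ZMod n, ∀ i, b.1 i = a.1 (i + t))) * n
      = ∑ k ∈ (Nat.gcd l n).divisors,
          k.totient * ((n / k - 1).choose (l / k - 1) * (n / k).choose (l / k)) := by
    rw [Nat.card_congr E, burnside hl, sum_transform hl hn]
  have hcast := congrArg (fun x : ℕ => (x : ℚ)) hN
  push_cast at hcast
  have hne : (n : ℚ) ≠ 0 := Nat.cast_ne_zero.2 hn.ne'
  rw [one_div_mul_eq_div, eq_div_iff hne]
  exact hcast.trans (Finset.sum_congr rfl fun k _ => by ring)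

end Nak
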